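/- Let A be a modal algebra such that □x ≤ □□x holds for every x ∈ A and such that 0 is the greatest lower bound of {◇ⁿ⊤ : n ∈ ω}. Then the non-compactness rule is true at A. (Hence 𝔄_◇ ⊆ 𝔄_nc.) -/
import Mathlib


/-- Modal formulas over a countable set of propositional variables. -/
inductive Fml : Type where
  | prop : ℕ → Fml
  | top : Fml
  | and : Fml → Fml → Fml
  | neg : Fml → Fml
  | box : Fml → Fml

namespace Fml
/-- `⊥` abbreviates `¬⊤`. -/
def bot : Fml := neg top
/-- `φ ∨ ψ` abbreviates `¬(¬φ ∧ ¬ψ)`. -/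
def or (φ ψ : Fml) : Fml := neg (and (neg φ) (neg ψ))
/-- `φ ⊃ ψ` abbreviates `¬(φ ∧ ¬ψ)`. -/
def imp (φ ψ : Fml) : Fml := neg (and φ (neg ψ))
/-- `◇φ` abbreviates `¬□¬φ`. -/
def dia (φ : Fml) : Fml := neg (box (neg φ))
/-- `◇ⁿφ`: n-fold application of `◇`. -/
def dian : ℕ → Fml → Fml
  | 0, φ => φ
  | n+1, φ => dia (dian n φ)
end Fml

/-- Valuation of modal formulas in a modal algebra. -/
def aval {A : Type} [BooleanAlgebra A] (box : A → A) (v : ℕ → A) : Fml → A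
  | .prop n => v n
  | .top => ⊤
  | .and φ ψ => aval box v φ ⊓ aval box v ψ
  | .neg φ => (aval box v φ)ᶜ
  | .box φ => box (aval box v φ)

/-- A formula is true at a modal algebra if it evaluates to `⊤` under every valuation. -/
def ATrue {A : Type} [BooleanAlgebra A] (box : A → A) (φ : Fml) : Prop :=
  ∀ v : ℕ → A, aval box v φ = ⊤

/-- The non-compactness rule is true at a modal algebra: for every formula `φ`,
if `φ ⊃ ◇ⁿ⊤` is true at the algebra for every `n`, then `φ ⊃ ⊥` is true at it. -/
def NCRule {A : Type} [BooleanAlgebra A] (box : A → A) : Prop :=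
  ∀ φ : Fml, (∀ n : ℕ, ATrue box (Fml.imp φ (Fml.dian n Fml.top))) →
    ATrue box (Fml.imp φ Fml.bot)

/-- The diamond operation `◇x = ¬□¬x` of a modal algebra. -/
def diaA {A : Type} [BooleanAlgebra A] (box : A → A) (x : A) : A := (box xᶜ)ᶜ

/-- `dianA box n = ◇ⁿ⊤`. -/
def dianA {A : Type} [BooleanAlgebra A] (box : A → A) : ℕ → A
  | 0 => ⊤
  | n+1 => diaA box (dianA box n)

lemma aval_dian_top {A : Type} [BooleanAlgebra A] (box : A → A) (v : ℕ → A) :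
    ∀ n : ℕ, aval box v (Fml.dian n Fml.top) = dianA box n
  | 0 => rfl
  | n+1 => by
    simp only [Fml.dian, Fml.dia, aval, dianA, diaA, aval_dian_top box v n]

theorem stmt9 {A : Type} [BooleanAlgebra A] (box : A → A)
    (hbox_top : box ⊤ = ⊤) (hbox_inf : ∀ x y : A, box (x ⊓ y) = box x ⊓ box y)
    (htrans : ∀ x : A, box x ≤ box (box x))
    (hglb : IsGLB (Set.range fun n : ℕ => dianA box n) (⊥ : A)) :
    NCRule box := by
  intro φ hφ v
  have hle : aval box v φ ≤ ⊥ := by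
    apply hglb.2
    rintro x ⟨n, rfl⟩
    have := hφ n v
    simp only [Fml.imp, aval, compl_eq_top, aval_dian_top] at this
    rw [← sdiff_eq] at this
    exact sdiff_eq_bot_iff.mp this
  simp only [Fml.imp, Fml.bot, aval, compl_eq_top]
  rw [le_bot_iff.mp hle]
  simp
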